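/- For a generic well-poised sequence, the summand F_k(a₁,…,a_{r+1}; q, z) := z^k · ∏_i (a_i;q)_k / [(q;q)_k · ∏_{i=2}^{r+1} (a₁q/a_i;q)_k] satisfies F_k(a₁,…,a_{r+1}; q, qz) − F_k(a₁,…,a_r, a_{r+1}q; q, z) = β · F_{k−1}(a₁q², a₂q, …, a_{r+1}q; q, z), where β = −(1−a₁)(1−a₁q)(1−a₂)⋯(1−a_r) z / [(1−a₁/a_{r+1})(1−a₁q/a₂)⋯(1−a₁q/a_{r+1})]. -/

import Mathlib

/-- The q-shifted factorial `(x;q)_n`. -/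
def qPoch {K : Type*} [Field K] (q x : K) (n : ℕ) : K :=
  ∏ j ∈ Finset.range n, (1 - x * q ^ j)

/-- The `k`-th term of a well-poised basic hypergeometric series with
upper parameters `a 1, …, a (r+1)`:
`F_k = z^k ∏_{i=1}^{r+1} (a_i;q)_k / ((q;q)_k ∏_{i=2}^{r+1} (a₁q/a_i;q)_k)`. -/
def wpTerm {K : Type*} [Field K] (q z : K) (r : ℕ) (a : ℕ → K) (k : ℕ) : K :=
  z ^ k * (∏ i ∈ Finset.Icc 1 (r + 1), qPoch q (a i) k) /
    (qPoch q q k * ∏ i ∈ Finset.Icc 2 (r + 1), qPoch q (a 1 * q / a i) k)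

private lemma qPoch_succ {K : Type*} [Field K] (q x : K) (n : ℕ) :
    qPoch q x (n+1) = qPoch q x n * (1 - x * q ^ n) :=
  Finset.prod_range_succ _ _

private lemma qPoch_shift {K : Type*} [Field K] (q x : K) (n : ℕ) :
    qPoch q x (n+1) = (1 - x) * qPoch q (x*q) n := by
  unfold qPoch
  rw [Finset.prod_range_succ']
  simp only [pow_zero, mul_one]
  rw [mul_comm]
  congr 1
  refine Finset.prod_congr rfl fun j _ => ?_
  ring

private lemma div3 {K : Type*} [Field K] {n1 d1 n2 d2 n3 d3 : K}
    (h1 : d1 ≠ 0) (h2 : d2 ≠ 0) (h3 : d3 ≠ 0)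
    (h : n1 * (d2 * d3) - n2 * (d1 * d3) = n3 * (d1 * d2)) :
    n1 / d1 - n2 / d2 = n3 / d3 := by
  rw [div_sub_div _ _ h1 h2, div_eq_div_iff (mul_ne_zero h1 h2) h3]
  linear_combination h

private lemma key {K : Type*} [Field K] (A A2 P U M W Eb Er V Qm a1 b q s z zm : K)
    (hb : b ≠ 0)
    (hW : W * (1 - a1 * q / b * s) = (1 - a1 * q / b) * Eb)
    (hA : A * (1 - a1 * (s * q)) = (1 - a1) * (1 - a1 * q) * A2) :
    (s*q) * (zm*z) * (A * ((U * P) * ((1 - b) * M))) *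
      (((Qm * (1 - q*s)) * ((V * Er) * ((1 - a1/b) * W))) *
       (((1 - a1/b) * (V * (1 - a1*q/b))) * (Qm * (Er * Eb))))
    - (zm*z) * (A * ((U * P) * (M * (1 - b*q*s)))) *
      (((Qm * (1 - q*s)) * ((V * Er) * ((1 - a1*q/b) * Eb))) *
       (((1 - a1/b) * (V * (1 - a1*q/b))) * (Qm * (Er * Eb))))
    = (-((1 - a1) * (1 - a1*q) * U * z)) * (zm * (A2 * (P * M))) *
      (((Qm * (1 - q*s)) * ((V * Er) * ((1 - a1*q/b) * Eb))) *
       ((Qm * (1 - q*s)) * ((V * Er) * ((1 - a1/b) * W)))) := by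
  obtain ⟨c, rfl⟩ : ∃ c, a1 = b * c := ⟨a1 / b, by field_simp⟩
  rw [show b * c / b = c from by field_simp,
    show b * c * q / b = c * q from by field_simp] at *
  linear_combination
    ((((1 - c) * (V * (1 - c*q))) * (Qm * (Er * Eb)))
      * (Qm * (1 - q*s) * V * Er) * ((zm*z) * U * P * M)
      * (A * (1 - b * (q*s)))) * hW
    - ((((1 - c) * (V * (1 - c*q))) * (Qm * (Er * Eb)))
      * (Qm * (1 - q*s) * V * Er) * ((zm*z) * U * P * M)
      * ((1 - q*s) * W)) * hA

/-- The second contiguous relation for well-poised terms: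
`F_k(a₁,…,a_{r+1}; q, qz) − F_k(a₁,…,a_r, a_{r+1}q; q, z) = β F_{k−1}(a₁q², a₂q, …, a_{r+1}q; q, z)`. -/
theorem wp_contiguous_two {K : Type*} [Field K] (q z : K) (r : ℕ) (a : ℕ → K) (k : ℕ)
    (hr : 2 ≤ r) (hk : 1 ≤ k) (hq : q ≠ 0) (ha : ∀ i, a i ≠ 0)
    (hqq : qPoch q q k ≠ 0)
    (hden : ∀ i ∈ Finset.Icc 2 (r + 1), qPoch q (a 1 * q / a i) k ≠ 0)
    (hdenr1 : qPoch q (a 1 / a (r + 1)) k ≠ 0)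
    (hden' : ∀ i ∈ Finset.Icc 2 (r + 1), qPoch q (a 1 * q ^ 2 / a i) (k - 1) ≠ 0)
    (h6 : 1 - a 1 / a (r + 1) ≠ 0)
    (h7 : ∀ i ∈ Finset.Icc 2 (r + 1), 1 - a 1 * q / a i ≠ 0) :
    wpTerm q (q * z) r a k
      - wpTerm q z r (Function.update a (r + 1) (a (r + 1) * q)) k
    = (-((1 - a 1) * (1 - a 1 * q) * (∏ i ∈ Finset.Icc 2 r, (1 - a i)) * z) /
        ((1 - a 1 / a (r + 1)) * ∏ i ∈ Finset.Icc 2 (r + 1), (1 - a 1 * q / a i))) *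
        wpTerm q z r (fun i => if i = 1 then a 1 * q ^ 2 else a i * q) (k - 1) := by
  obtain ⟨m, rfl⟩ : ∃ m, k = m + 1 := ⟨k - 1, by omega⟩
  simp only [Nat.add_sub_cancel] at hden' ⊢
  -- splitting products
  have split1 : ∀ f : ℕ → K, ∏ i ∈ Finset.Icc 1 (r+1), f i
      = f 1 * ∏ i ∈ Finset.Icc 2 (r+1), f i := by
    intro f
    have h : Finset.Icc 1 (r+1) = insert 1 (Finset.Icc 2 (r+1)) := by
      ext x; simp [Finset.mem_Icc]; omega
    rw [h, Finset.prod_insert (by simp)]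
  have split2 : ∀ f : ℕ → K, ∏ i ∈ Finset.Icc 2 (r+1), f i
      = (∏ i ∈ Finset.Icc 2 r, f i) * f (r+1) :=
    fun f => Finset.prod_Icc_succ_top (by omega) f
  have memr1 : r + 1 ∈ Finset.Icc 2 (r+1) := by simp [Finset.mem_Icc]; omega
  have memr : ∀ i ∈ Finset.Icc 2 r, i ∈ Finset.Icc 2 (r+1) := by
    intro i hi; simp only [Finset.mem_Icc] at *; omega
  -- the three terms in atomized form
  have e1 : wpTerm q (q*z) r a (m+1)
      = (q^m*q) * (z^m*z) * (qPoch q (a 1) (m+1) *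
          (((∏ i ∈ Finset.Icc 2 r, (1 - a i)) * ∏ i ∈ Finset.Icc 2 r, qPoch q (a i * q) m)
            * ((1 - a (r+1)) * qPoch q (a (r+1) * q) m)))
        / ((qPoch q q m * (1 - q * q^m)) *
            (((∏ i ∈ Finset.Icc 2 r, (1 - a 1 * q / a i))
                * ∏ i ∈ Finset.Icc 2 r, qPoch q (a 1 * q^2 / a i) m)
              * ((1 - a 1 * q / a (r+1)) * qPoch q (a 1 * q^2 / a (r+1)) m))) := by
    unfold wpTerm
    rw [split1, split2 (fun i => qPoch q (a i) (m+1)),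
      split2 (fun i => qPoch q (a 1 * q / a i) (m+1))]
    rw [qPoch_succ q q m, qPoch_shift q (a (r+1)) m, qPoch_shift q (a 1 * q / a (r+1)) m,
      show a 1 * q / a (r+1) * q = a 1 * q^2 / a (r+1) by ring,
      show (∏ i ∈ Finset.Icc 2 r, qPoch q (a i) (m+1))
          = ∏ i ∈ Finset.Icc 2 r, ((1 - a i) * qPoch q (a i * q) m) from
        Finset.prod_congr rfl fun i _ => qPoch_shift q (a i) m,
      show (∏ i ∈ Finset.Icc 2 r, qPoch q (a 1 * q / a i) (m+1))
          = ∏ i ∈ Finset.Icc 2 r, ((1 - a 1 * q / a i) * qPoch q (a 1 * q^2 / a i) m) from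
        Finset.prod_congr rfl fun i _ => by
          rw [qPoch_shift, show a 1 * q / a i * q = a 1 * q^2 / a i by ring],
      Finset.prod_mul_distrib, Finset.prod_mul_distrib]
    ring
  have e2 : wpTerm q z r (Function.update a (r + 1) (a (r + 1) * q)) (m+1)
      = (z^m*z) * (qPoch q (a 1) (m+1) *
          (((∏ i ∈ Finset.Icc 2 r, (1 - a i)) * ∏ i ∈ Finset.Icc 2 r, qPoch q (a i * q) m)
            * (qPoch q (a (r+1) * q) m * (1 - a (r+1) * q * q^m))))
        / ((qPoch q q m * (1 - q * q^m)) *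
            (((∏ i ∈ Finset.Icc 2 r, (1 - a 1 * q / a i))
                * ∏ i ∈ Finset.Icc 2 r, qPoch q (a 1 * q^2 / a i) m)
              * ((1 - a 1 / a (r+1)) * qPoch q (a 1 * q / a (r+1)) m))) := by
    unfold wpTerm
    rw [split1, split2 (fun i => qPoch q (Function.update a (r + 1) (a (r + 1) * q) i) (m+1)),
      split2 (fun i => qPoch q (Function.update a (r + 1) (a (r + 1) * q) 1 * q /
        Function.update a (r + 1) (a (r + 1) * q) i) (m+1))]
    simp only [Function.update_self,
      Function.update_of_ne (show (1:ℕ) ≠ r + 1 by omega)]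
    rw [show (∏ i ∈ Finset.Icc 2 r,
          qPoch q (Function.update a (r + 1) (a (r + 1) * q) i) (m+1))
        = ∏ i ∈ Finset.Icc 2 r, ((1 - a i) * qPoch q (a i * q) m) from
      Finset.prod_congr rfl fun i hi => by
        rw [Function.update_of_ne (show i ≠ r + 1 by
          simp only [Finset.mem_Icc] at hi; omega), qPoch_shift],
      show (∏ i ∈ Finset.Icc 2 r,
          qPoch q (a 1 * q / Function.update a (r + 1) (a (r + 1) * q) i) (m+1))
        = ∏ i ∈ Finset.Icc 2 r, ((1 - a 1 * q / a i) * qPoch q (a 1 * q^2 / a i) m) from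
      Finset.prod_congr rfl fun i hi => by
        rw [Function.update_of_ne (show i ≠ r + 1 by
          simp only [Finset.mem_Icc] at hi; omega), qPoch_shift,
          show a 1 * q / a i * q = a 1 * q^2 / a i by ring],
      qPoch_succ q q m, qPoch_succ q (a (r+1) * q) m,
      show a 1 * q / (a (r+1) * q) = a 1 / a (r+1) from mul_div_mul_right _ _ hq,
      qPoch_shift q (a 1 / a (r+1)) m,
      show a 1 / a (r+1) * q = a 1 * q / a (r+1) by ring,
      Finset.prod_mul_distrib, Finset.prod_mul_distrib]
    ring
  have hr1 : ((r + 1 = 1) = False) := by simp; omega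
  have e3 : wpTerm q z r (fun i => if i = 1 then a 1 * q ^ 2 else a i * q) m
      = z^m * (qPoch q (a 1 * q^2) m *
          ((∏ i ∈ Finset.Icc 2 r, qPoch q (a i * q) m) * qPoch q (a (r+1) * q) m))
        / (qPoch q q m *
            ((∏ i ∈ Finset.Icc 2 r, qPoch q (a 1 * q^2 / a i) m)
              * qPoch q (a 1 * q^2 / a (r+1)) m)) := by
    unfold wpTerm
    rw [split1, split2 (fun i => qPoch q (if i = 1 then a 1 * q ^ 2 else a i * q) m),
      split2 (fun i => qPoch q ((if (1:ℕ) = 1 then a 1 * q ^ 2 else a 1 * q) * q /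
        (if i = 1 then a 1 * q ^ 2 else a i * q)) m)]
    simp only [eq_self_iff_true, if_true, hr1, if_false]
    rw [show (∏ i ∈ Finset.Icc 2 r, qPoch q (if i = 1 then a 1 * q ^ 2 else a i * q) m)
        = ∏ i ∈ Finset.Icc 2 r, qPoch q (a i * q) m from
      Finset.prod_congr rfl fun i hi => by
        rw [if_neg (show i ≠ 1 by simp only [Finset.mem_Icc] at hi; omega)],
      show (∏ i ∈ Finset.Icc 2 r,
          qPoch q (a 1 * q ^ 2 * q / (if i = 1 then a 1 * q ^ 2 else a i * q)) m)
        = ∏ i ∈ Finset.Icc 2 r, qPoch q (a 1 * q^2 / a i) m from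
      Finset.prod_congr rfl fun i hi => by
        rw [if_neg (show i ≠ 1 by simp only [Finset.mem_Icc] at hi; omega),
          show a 1 * q ^ 2 * q / (a i * q) = a 1 * q^2 / a i from mul_div_mul_right _ _ hq],
      show a 1 * q ^ 2 * q / (a (r+1) * q) = a 1 * q^2 / a (r+1) from mul_div_mul_right _ _ hq]
  -- key qPoch relations
  have hA : qPoch q (a 1) (m+1) * (1 - a 1 * (q^m * q))
      = (1 - a 1) * (1 - a 1 * q) * qPoch q (a 1 * q^2) m := by
    have h1 := qPoch_succ q (a 1) (m+1)
    have h2 := qPoch_shift q (a 1) (m+1)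
    rw [qPoch_shift q (a 1 * q) m, show a 1 * q * q = a 1 * q^2 by ring] at h2
    linear_combination h2 - h1
  have hW : qPoch q (a 1 * q / a (r+1)) m * (1 - a 1 * q / a (r+1) * q^m)
      = (1 - a 1 * q / a (r+1)) * qPoch q (a 1 * q^2 / a (r+1)) m := by
    have h1 := qPoch_succ q (a 1 * q / a (r+1)) m
    have h2 := qPoch_shift q (a 1 * q / a (r+1)) m
    rw [show a 1 * q / a (r+1) * q = a 1 * q^2 / a (r+1) by ring] at h2
    linear_combination h1.symm.trans h2
  -- nonvanishing facts
  rw [qPoch_succ] at hqq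
  have hQm : qPoch q q m ≠ 0 := left_ne_zero_of_mul hqq
  have ht : (1 : K) - q * q^m ≠ 0 := right_ne_zero_of_mul hqq
  have hV : (∏ i ∈ Finset.Icc 2 r, (1 - a 1 * q / a i)) ≠ 0 :=
    Finset.prod_ne_zero_iff.mpr fun i hi => h7 i (memr i hi)
  have hEr : (∏ i ∈ Finset.Icc 2 r, qPoch q (a 1 * q^2 / a i) m) ≠ 0 :=
    Finset.prod_ne_zero_iff.mpr fun i hi => hden' i (memr i hi)
  have hEb : qPoch q (a 1 * q^2 / a (r+1)) m ≠ 0 := hden' _ memr1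
  have h7r : (1 : K) - a 1 * q / a (r+1) ≠ 0 := h7 _ memr1
  have hW0 : qPoch q (a 1 * q / a (r+1)) m ≠ 0 := by
    rw [qPoch_shift, show a 1 / a (r+1) * q = a 1 * q / a (r+1) by ring] at hdenr1
    exact right_ne_zero_of_mul hdenr1
  -- assemble
  rw [e1, e2, e3, split2 (fun i => 1 - a 1 * q / a i), div_mul_div_comm]
  refine div3 ?_ ?_ ?_ ?_
  · exact mul_ne_zero (mul_ne_zero hQm ht)
      (mul_ne_zero (mul_ne_zero hV hEr) (mul_ne_zero h7r hEb))
  · exact mul_ne_zero (mul_ne_zero hQm ht)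
      (mul_ne_zero (mul_ne_zero hV hEr) (mul_ne_zero h6 hW0))
  · exact mul_ne_zero (mul_ne_zero h6 (mul_ne_zero hV h7r))
      (mul_ne_zero hQm (mul_ne_zero hEr hEb))
  · exact key _ _ _ _ _ _ _ _ _ _ _ _ _ _ _ _ (ha (r+1)) hW hA
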